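/- arXiv:1910.08590 — 5 statements merged into one kernel-verified Lean document; each statement's English description precedes it below -/
import Mathlib

section
/- Let f' be defined by f'(x) = x/10 − 24.9 for x < −1, f'(x) = 25x for −1 ≤ x < 1, f'(x) = x/10 + 24.9 for x ≥ 1. Define the AA-GD update x_{k+1} = (f'(x_{k-1})·x_k − f'(x_k)·x_{k-1}) / (f'(x_{k-1}) − f'(x_k)) whenever f'(x_{k-1}) ≠ f'(x_k). If x_k ≥ 1 and x_{k-1} ≥ 1 with x_k ≠ x_{k-1}, then x_{k+1} = −249. -/
/-- The piecewise-linear gradient of the one-dimensional counterexample. -/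
noncomputable def fd (x : ℝ) : ℝ :=
  if x < -1 then x / 10 - 24.9
  else if x < 1 then 25 * x
  else x / 10 + 24.9

theorem stmt_2 (xk xkm : ℝ) (hk : 1 ≤ xk) (hkm : 1 ≤ xkm) (hne : xk ≠ xkm) :
    fd xkm ≠ fd xk ∧
    (fd xkm * xk - fd xk * xkm) / (fd xkm - fd xk) = -249 := by
  have h1 : fd xk = xk / 10 + 24.9 := by
    unfold fd; rw [if_neg (by linarith), if_neg (by linarith)]
  have h2 : fd xkm = xkm / 10 + 24.9 := by
    unfold fd; rw [if_neg (by linarith), if_neg (by linarith)]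
  have hd : fd xkm - fd xk = (xkm - xk) / 10 := by rw [h1, h2]; ring
  have hne' : xkm - xk ≠ 0 := fun h => hne (by linarith)
  constructor
  · intro h
    apply hne'
    have := sub_eq_zero_of_eq h
    rw [hd] at this
    field_simp at this
    linarith
  · rw [h1, h2]
    rw [div_eq_iff (by intro h; exact hne' (by linarith))]
    ring
end

section
/- With f' as in the one-dimensional counterexample, if x_k ≤ −1 and x_{k-1} ≤ −1 with x_k ≠ x_{k-1}, then the AA-GD update x_{k+1} = (f'(x_{k-1})·x_k − f'(x_k)·x_{k-1}) / (f'(x_{k-1}) − f'(x_k)) equals +249. -/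
lemma fd_of_le (x : ℝ) (hx : x ≤ -1) : fd x = x / 10 - 24.9 := by
  rcases lt_or_eq_of_le hx with h | h
  · simp [fd, h]
  · subst h; norm_num [fd]

theorem stmt_3 (xk xkm : ℝ) (hk : xk ≤ -1) (hkm : xkm ≤ -1) (hne : xk ≠ xkm) :
    fd xkm ≠ fd xk ∧
    (fd xkm * xk - fd xk * xkm) / (fd xkm - fd xk) = 249 := by
  rw [fd_of_le _ hk, fd_of_le _ hkm]
  have hd : xkm / 10 - 24.9 - (xk / 10 - 24.9) = (xkm - xk) / 10 := by ring
  have hne' : xkm - xk ≠ 0 := sub_ne_zero.mpr (Ne.symm hne)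
  constructor
  · intro h
    apply hne'
    have := sub_eq_zero.mpr h
    rw [hd] at this
    linarith [this]
  · rw [hd]
    field_simp
    ring
end

section
/- Let g : ℝⁿ → ℝⁿ satisfy g(y⋆) = y⋆ and be differentiable at y⋆ with Jacobian G, ρ := ‖G‖₂ < 1. Fix m ∈ ℕ, a bound M ≥ 1 on the ℓ¹-norms of the extrapolation coefficients, and ρ̂ ∈ (ρ, 1). Then there exists r > 0 such that: for any sequence (y_k) with y₀ ∈ B(y⋆, r), y₁ = g(y₀), and y_{k+1} = Σ_{i=0}^{m_k} α_i^k g(y_{k−i}) where m_k = min(m,k), Σ_i α_i^k = 1, ‖α^k‖₁ ≤ M, and ‖Σ_i α_i^k F(y_{k−i})‖ ≤ ‖F(y_k)‖ with F(y) = g(y) − y, it holds that ‖F(y_k)‖ ≤ ρ̂^k ‖F(y₀)‖ for all k. -/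
set_option maxHeartbeats 1000000 in
theorem stmt_11 (n : ℕ) (g : EuclideanSpace ℝ (Fin n) → EuclideanSpace ℝ (Fin n))
    (ystar : EuclideanSpace ℝ (Fin n))
    (G : EuclideanSpace ℝ (Fin n) →L[ℝ] EuclideanSpace ℝ (Fin n))
    (hderiv : HasFDerivAt g G ystar) (hfix : g ystar = ystar)
    (ρ : ℝ) (hρ : ‖G‖ = ρ) (hρ1 : ρ < 1)
    (m : ℕ) (M : ℝ) (hM : 1 ≤ M) (ρhat : ℝ) (hρhat : ρhat ∈ Set.Ioo ρ 1) :
    ∃ r > 0, ∀ (y : ℕ → EuclideanSpace ℝ (Fin n)) (α : ℕ → ℕ → ℝ),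
      ‖y 0 - ystar‖ < r →
      y 1 = g (y 0) →
      (∀ k, 1 ≤ k →
        y (k + 1) = ∑ i ∈ Finset.range (min m k + 1), α k i • g (y (k - i))) →
      (∀ k, 1 ≤ k → ∑ i ∈ Finset.range (min m k + 1), α k i = 1) →
      (∀ k, 1 ≤ k → ∑ i ∈ Finset.range (min m k + 1), |α k i| ≤ M) →
      (∀ k, 1 ≤ k →
        ‖∑ i ∈ Finset.range (min m k + 1), α k i • (g (y (k - i)) - y (k - i))‖
          ≤ ‖g (y k) - y k‖) →
      ∀ k, ‖g (y k) - y k‖ ≤ ρhat ^ k * ‖g (y 0) - y 0‖ := by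
  obtain ⟨hρρh, hρh1⟩ := hρhat
  have hρ0 : 0 ≤ ρ := hρ ▸ norm_nonneg G
  have hρh0 : 0 < ρhat := lt_of_le_of_lt hρ0 hρρh
  set P : ℝ := (ρhat ^ m)⁻¹ with hP
  have hPm : 0 < ρhat ^ m := pow_pos hρh0 m
  have hP0 : 0 < P := by positivity
  have hP1 : 1 ≤ P := by
    rw [hP, le_inv_comm₀ one_pos hPm, inv_one]
    exact pow_le_one₀ hρh0.le hρh1.le
  have hM0 : 0 < M := lt_of_lt_of_le one_pos hM
  set K : ℝ := 4 * M * P with hK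
  have hK0 : 0 < K := by positivity
  set ε : ℝ := min ((1 - ρhat) / 2) ((ρhat - ρ) * (1 - ρhat) / K) with hε
  have hε0 : 0 < ε := lt_min (by linarith) (div_pos (mul_pos (by linarith) (by linarith)) hK0)
  have hε1 : ε ≤ (1 - ρhat) / 2 := min_le_left _ _
  have hεK : ε * K ≤ (ρhat - ρ) * (1 - ρhat) := by
    have h := min_le_right ((1 - ρhat) / 2) ((ρhat - ρ) * (1 - ρhat) / K)
    calc ε * K ≤ (ρhat - ρ) * (1 - ρhat) / K * K :=
          mul_le_mul_of_nonneg_right h hK0.le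
      _ = (ρhat - ρ) * (1 - ρhat) := div_mul_cancel₀ _ hK0.ne'
  -- get the radius for the little-o estimate
  have hlo := (hderiv.isLittleO).def hε0
  rw [Metric.eventually_nhds_iff] at hlo
  obtain ⟨δ, hδ0, hδ⟩ := hlo
  set R : ℝ := δ / 2 with hR
  have hR0 : 0 < R := by positivity
  have hΔ : ∀ z, ‖z - ystar‖ ≤ R → ‖g z - ystar - G (z - ystar)‖ ≤ ε * ‖z - ystar‖ := by
    intro z hz
    have hd : dist z ystar < δ := by
      rw [dist_eq_norm]; linarith
    have := hδ hd
    rwa [hfix] at this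
  set c : ℝ := 1 - ρ - ε with hc
  have hc2 : (1 - ρhat) / 2 < c := by
    have : ρ < ρhat := hρρh
    simp only [hc]; linarith
  have hc0 : 0 < c := by linarith
  have hρε1 : ρ + ε ≤ 1 := by linarith
  -- bound on ‖g z - ystar‖ in the ball
  have hgy : ∀ z, ‖z - ystar‖ ≤ R → ‖g z - ystar‖ ≤ (ρ + ε) * ‖z - ystar‖ := by
    intro z hz
    have h1 := hΔ z hz
    have h2 : ‖G (z - ystar)‖ ≤ ρ * ‖z - ystar‖ := hρ ▸ G.le_opNorm _
    have h3 : g z - ystar = G (z - ystar) + (g z - ystar - G (z - ystar)) := by abel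
    calc ‖g z - ystar‖ = ‖G (z - ystar) + (g z - ystar - G (z - ystar))‖ := by rw [← h3]
      _ ≤ ‖G (z - ystar)‖ + ‖g z - ystar - G (z - ystar)‖ := norm_add_le _ _
      _ ≤ (ρ + ε) * ‖z - ystar‖ := by linarith
  -- reverse bound
  have hlow : ∀ z, ‖z - ystar‖ ≤ R → c * ‖z - ystar‖ ≤ ‖g z - z‖ := by
    intro z hz
    have h1 := hgy z hz
    have h2 : ‖z - ystar‖ ≤ ‖z - g z‖ + ‖g z - ystar‖ := by
      have : z - ystar = (z - g z) + (g z - ystar) := by abel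
      rw [this]; exact norm_add_le _ _
    have h3 : ‖z - g z‖ = ‖g z - z‖ := norm_sub_rev _ _
    simp only [hc]; nlinarith [norm_nonneg (z - ystar)]
  set D : ℝ := 1 + M * P / c with hD
  have hD0 : 0 < D := by positivity
  refine ⟨min R (R / (2 * D)), lt_min hR0 (by positivity), ?_⟩
  intro y α h0 hy1 hrec hsum habs hcons
  set α' : ℕ → ℕ → ℝ := fun k i => if k = 0 then (if i = 0 then (1:ℝ) else 0) else α k i
    with hα'
  have hrec' : ∀ k, y (k + 1) = ∑ i ∈ Finset.range (min m k + 1), α' k i • g (y (k - i)) := by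
    intro k
    match k with
    | 0 => simp [hα', hy1]
    | Nat.succ j => simpa [hα'] using hrec (j + 1) (Nat.succ_le_succ j.zero_le)
  have hsum' : ∀ k, ∑ i ∈ Finset.range (min m k + 1), α' k i = 1 := by
    intro k
    match k with
    | 0 => simp [hα']
    | Nat.succ j => simpa [hα'] using hsum (j + 1) (Nat.succ_le_succ j.zero_le)
  have habs' : ∀ k, ∑ i ∈ Finset.range (min m k + 1), |α' k i| ≤ M := by
    intro k
    match k with
    | 0 => simpa [hα'] using hM
    | Nat.succ j => simpa [hα'] using habs (j + 1) (Nat.succ_le_succ j.zero_le)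
  have hcons' : ∀ k,
      ‖∑ i ∈ Finset.range (min m k + 1), α' k i • (g (y (k - i)) - y (k - i))‖
        ≤ ‖g (y k) - y k‖ := by
    intro k
    match k with
    | 0 => simp [hα']
    | Nat.succ j => simpa [hα'] using hcons (j + 1) (Nat.succ_le_succ j.zero_le)
  set N : ℝ := ‖g (y 0) - y 0‖ with hN
  have hN0 : 0 ≤ N := norm_nonneg _
  have hball0 : ‖y 0 - ystar‖ ≤ R := le_of_lt (lt_of_lt_of_le h0 (min_le_left _ _))
  have hN2r : N ≤ 2 * (min R (R / (2 * D))) := by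
    have h1 := hgy (y 0) hball0
    have h2 : ‖g (y 0) - y 0‖ ≤ ‖g (y 0) - ystar‖ + ‖ystar - y 0‖ := by
      have : g (y 0) - y 0 = (g (y 0) - ystar) + (ystar - y 0) := by abel
      rw [this]; exact norm_add_le _ _
    have h3 : ‖ystar - y 0‖ = ‖y 0 - ystar‖ := norm_sub_rev _ _
    have h4 : ‖y 0 - ystar‖ ≤ min R (R / (2 * D)) := h0.le
    have h5 : (ρ + ε) * ‖y 0 - ystar‖ ≤ 1 * ‖y 0 - ystar‖ :=
      mul_le_mul_of_nonneg_right hρε1 (norm_nonneg _)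
    linarith
  have hNR : D * N ≤ R := by
    have h1 : min R (R / (2 * D)) ≤ R / (2 * D) := min_le_right _ _
    have h2 : N ≤ 2 * (R / (2 * D)) := by linarith
    have h3 : 2 * (R / (2 * D)) = R / D := by
      field_simp
    calc D * N ≤ D * (R / D) := mul_le_mul_of_nonneg_left (h2.trans_eq h3) hD0.le
      _ = R := by field_simp
  -- decomposition identity: y (k+1) - ystar as an affine combination
  have hA : ∀ k, y (k + 1) - ystar
      = ∑ i ∈ Finset.range (min m k + 1), α' k i • (g (y (k - i)) - ystar) := by
    intro k
    rw [hrec' k]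
    have h1 : ystar = ∑ i ∈ Finset.range (min m k + 1), α' k i • ystar := by
      rw [← Finset.sum_smul, hsum' k, one_smul]
    conv_lhs => rw [h1]
    rw [← Finset.sum_sub_distrib]
    exact Finset.sum_congr rfl fun i _ => (smul_sub _ _ _).symm
  -- key identity for the residual
  have hpt : ∀ z, G (g z - ystar) - (g z - ystar)
      = G (g z - z) - (g z - ystar - G (z - ystar)) := by
    intro z
    rw [map_sub G (g z) z, map_sub G (g z) ystar, map_sub G z ystar]
    abel
  have hkey : ∀ k, g (y (k + 1)) - y (k + 1)
      = G (∑ i ∈ Finset.range (min m k + 1), α' k i • (g (y (k - i)) - y (k - i)))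
        - (∑ i ∈ Finset.range (min m k + 1),
            α' k i • (g (y (k - i)) - ystar - G (y (k - i) - ystar)))
        + (g (y (k + 1)) - ystar - G (y (k + 1) - ystar)) := by
    intro k
    have step1 : g (y (k + 1)) - y (k + 1)
        = (G (y (k + 1) - ystar) - (y (k + 1) - ystar))
          + (g (y (k + 1)) - ystar - G (y (k + 1) - ystar)) := by abel
    rw [step1, hA k, map_sum, ← Finset.sum_sub_distrib]
    congr 1
    rw [map_sum, ← Finset.sum_sub_distrib]
    refine Finset.sum_congr rfl fun i _ => ?_
    rw [map_smul, ← smul_sub, map_smul, ← smul_sub, hpt]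
  -- main induction
  have main : ∀ k, ‖y k - ystar‖ ≤ R ∧ ‖g (y k) - y k‖ ≤ ρhat ^ k * N := by
    intro k
    induction k using Nat.strong_induction_on with
    | _ k IH =>
      match k with
      | 0 => exact ⟨hball0, by simp; exact le_rfl⟩
      | Nat.succ j =>
        set B : ℝ := ρhat ^ j * P * N / c with hB
        have hB0 : 0 ≤ B := by positivity
        have hprev : ∀ i ∈ Finset.range (min m j + 1),
            ‖y (j - i) - ystar‖ ≤ R ∧ ‖y (j - i) - ystar‖ ≤ B := by
          intro i hi
          rw [Finset.mem_range, Nat.lt_succ_iff] at hi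
          have him : i ≤ m := le_trans hi (min_le_left _ _)
          have hij : i ≤ j := le_trans hi (min_le_right _ _)
          obtain ⟨hb, hf⟩ := IH (j - i) (lt_of_le_of_lt (Nat.sub_le j i) (Nat.lt_succ_self j))
          refine ⟨hb, ?_⟩
          have h1 := hlow _ hb
          have h2 : ρhat ^ (j - i) ≤ ρhat ^ j * P := by
            rw [pow_sub₀ ρhat hρh0.ne' hij, hP]
            have hmi : ρhat ^ m ≤ ρhat ^ i := pow_le_pow_of_le_one hρh0.le hρh1.le him
            have h4 : (ρhat ^ i)⁻¹ ≤ (ρhat ^ m)⁻¹ := by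
              apply inv_anti₀ (pow_pos hρh0 m) hmi
            calc ρhat ^ j / ρhat ^ i = ρhat ^ j * (ρhat ^ i)⁻¹ := div_eq_mul_inv _ _
              _ ≤ ρhat ^ j * (ρhat ^ m)⁻¹ :=
                  mul_le_mul_of_nonneg_left h4 (by positivity)
          have h3 : ‖g (y (j - i)) - y (j - i)‖ ≤ ρhat ^ j * P * N := by
            calc ‖g (y (j - i)) - y (j - i)‖ ≤ ρhat ^ (j - i) * N := hf
              _ ≤ ρhat ^ j * P * N := mul_le_mul_of_nonneg_right h2 hN0
          rw [hB, le_div_iff₀ hc0]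
          linarith [h1]
        -- bound on new iterate distance
        have hballnew : ‖y (j + 1) - ystar‖ ≤ M * B := by
          rw [hA j]
          calc ‖∑ i ∈ Finset.range (min m j + 1), α' j i • (g (y (j - i)) - ystar)‖
              ≤ ∑ i ∈ Finset.range (min m j + 1), ‖α' j i • (g (y (j - i)) - ystar)‖ :=
                norm_sum_le _ _
            _ ≤ ∑ i ∈ Finset.range (min m j + 1), |α' j i| * B := by
                refine Finset.sum_le_sum fun i hi => ?_
                rw [norm_smul, Real.norm_eq_abs]
                refine mul_le_mul_of_nonneg_left ?_ (abs_nonneg _)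
                obtain ⟨hb, hbB⟩ := hprev i hi
                calc ‖g (y (j - i)) - ystar‖ ≤ (ρ + ε) * ‖y (j - i) - ystar‖ := hgy _ hb
                  _ ≤ 1 * ‖y (j - i) - ystar‖ :=
                      mul_le_mul_of_nonneg_right hρε1 (norm_nonneg _)
                  _ = ‖y (j - i) - ystar‖ := one_mul _
                  _ ≤ B := hbB
            _ = (∑ i ∈ Finset.range (min m j + 1), |α' j i|) * B := (Finset.sum_mul _ _ _).symm
            _ ≤ M * B := mul_le_mul_of_nonneg_right (habs' j) hB0
        have hballR : ‖y (j + 1) - ystar‖ ≤ R := by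
          have hj1 : ρhat ^ j ≤ 1 := pow_le_one₀ hρh0.le hρh1.le
          have hBle : B ≤ P * N / c := by
            rw [hB]
            calc ρhat ^ j * P * N / c = (P * N / c) * ρhat ^ j := by ring
              _ ≤ (P * N / c) * 1 := mul_le_mul_of_nonneg_left hj1 (by positivity)
              _ = P * N / c := mul_one _
          have h1 : M * B ≤ M * (P * N / c) := mul_le_mul_of_nonneg_left hBle hM0.le
          have h2 : M * (P * N / c) ≤ D * N := by
            rw [hD]
            have h5 : M * (P * N / c) = (M * P / c) * N := by ring
            rw [h5]
            nlinarith [hN0]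
          exact hballnew.trans (h1.trans (h2.trans hNR))
        refine ⟨hballR, ?_⟩
        -- residual bound
        have hs : ‖∑ i ∈ Finset.range (min m j + 1), α' j i • (g (y (j - i)) - y (j - i))‖
            ≤ ρhat ^ j * N :=
          le_trans (hcons' j) (IH j (Nat.lt_succ_self j)).2
        have hGs : ‖G (∑ i ∈ Finset.range (min m j + 1),
            α' j i • (g (y (j - i)) - y (j - i)))‖ ≤ ρ * (ρhat ^ j * N) := by
          calc ‖G _‖ ≤ ρ * ‖∑ i ∈ Finset.range (min m j + 1),
                α' j i • (g (y (j - i)) - y (j - i))‖ := hρ ▸ G.le_opNorm _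
            _ ≤ ρ * (ρhat ^ j * N) := mul_le_mul_of_nonneg_left hs hρ0
        have hΔsum : ‖∑ i ∈ Finset.range (min m j + 1),
            α' j i • (g (y (j - i)) - ystar - G (y (j - i) - ystar))‖ ≤ M * (ε * B) := by
          calc ‖∑ i ∈ Finset.range (min m j + 1),
                α' j i • (g (y (j - i)) - ystar - G (y (j - i) - ystar))‖
              ≤ ∑ i ∈ Finset.range (min m j + 1),
                ‖α' j i • (g (y (j - i)) - ystar - G (y (j - i) - ystar))‖ := norm_sum_le _ _
            _ ≤ ∑ i ∈ Finset.range (min m j + 1), |α' j i| * (ε * B) := by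
                refine Finset.sum_le_sum fun i hi => ?_
                rw [norm_smul, Real.norm_eq_abs]
                refine mul_le_mul_of_nonneg_left ?_ (abs_nonneg _)
                obtain ⟨hb, hbB⟩ := hprev i hi
                calc ‖g (y (j - i)) - ystar - G (y (j - i) - ystar)‖
                    ≤ ε * ‖y (j - i) - ystar‖ := hΔ _ hb
                  _ ≤ ε * B := mul_le_mul_of_nonneg_left hbB hε0.le
            _ = (∑ i ∈ Finset.range (min m j + 1), |α' j i|) * (ε * B) :=
                (Finset.sum_mul _ _ _).symm
            _ ≤ M * (ε * B) := mul_le_mul_of_nonneg_right (habs' j) (by positivity)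
        have hΔnew : ‖g (y (j + 1)) - ystar - G (y (j + 1) - ystar)‖ ≤ ε * (M * B) := by
          calc ‖g (y (j + 1)) - ystar - G (y (j + 1) - ystar)‖
              ≤ ε * ‖y (j + 1) - ystar‖ := hΔ _ hballR
            _ ≤ ε * (M * B) := mul_le_mul_of_nonneg_left hballnew hε0.le
        have htotal : ‖g (y (j + 1)) - y (j + 1)‖
            ≤ ρ * (ρhat ^ j * N) + M * (ε * B) + ε * (M * B) := by
          rw [hkey j]
          refine le_trans (norm_add_le _ _) ?_
          refine add_le_add (le_trans (norm_sub_le _ _) ?_) hΔnew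
          exact add_le_add hGs hΔsum
        have hcontr : ρ + 2 * ε * M * P / c ≤ ρhat := by
          have h1 : 2 * ε * M * P / c ≤ ρhat - ρ := by
            rw [div_le_iff₀ hc0]
            have h2 : ε * (4 * M * P) ≤ (ρhat - ρ) * (1 - ρhat) := by
              rw [← hK]; exact hεK
            nlinarith [mul_le_mul_of_nonneg_left hc2.le (by linarith : (0:ℝ) ≤ ρhat - ρ)]
          linarith
        calc ‖g (y (j + 1)) - y (j + 1)‖
            ≤ ρ * (ρhat ^ j * N) + M * (ε * B) + ε * (M * B) := htotal
          _ = (ρ + 2 * ε * M * P / c) * (ρhat ^ j * N) := by rw [hB]; ring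
          _ ≤ ρhat * (ρhat ^ j * N) :=
              mul_le_mul_of_nonneg_right hcontr (by positivity)
          _ = ρhat ^ (j + 1) * N := by ring
  intro k
  exact (main k).2
end

section
/- Under the hypotheses of the local Anderson acceleration convergence theorem (g differentiable at its fixed point y⋆, ρ = ‖G‖₂ < 1, coefficients affinely constrained with ℓ¹-bound M, ρ̂ ∈ (ρ,1), y₀ sufficiently close to y⋆), the iterates satisfy ‖y_k − y⋆‖ ≤ ((1+ρ)/(1−ρ)) ρ̂^k ‖y₀ − y⋆‖ for all k, and consequently limsup_{k→∞} (‖y_k − y⋆‖ / ‖y₀ − y⋆‖)^{1/k} ≤ ρ̂. -/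
open Filter Finset

set_option maxHeartbeats 2000000

theorem stmt_12 (n : ℕ) (g : EuclideanSpace ℝ (Fin n) → EuclideanSpace ℝ (Fin n))
    (ystar : EuclideanSpace ℝ (Fin n))
    (G : EuclideanSpace ℝ (Fin n) →L[ℝ] EuclideanSpace ℝ (Fin n))
    (hderiv : HasFDerivAt g G ystar) (hfix : g ystar = ystar)
    (ρ : ℝ) (hρ : ‖G‖ = ρ) (hρ1 : ρ < 1)
    (m : ℕ) (M : ℝ) (hM : 1 ≤ M) (ρhat : ℝ) (hρhat : ρhat ∈ Set.Ioo ρ 1) :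
    ∃ r > 0, ∀ (y : ℕ → EuclideanSpace ℝ (Fin n)) (α : ℕ → ℕ → ℝ),
      ‖y 0 - ystar‖ < r →
      y 1 = g (y 0) →
      (∀ k, 1 ≤ k →
        y (k + 1) = ∑ i ∈ Finset.range (min m k + 1), α k i • g (y (k - i))) →
      (∀ k, 1 ≤ k → ∑ i ∈ Finset.range (min m k + 1), α k i = 1) →
      (∀ k, 1 ≤ k → ∑ i ∈ Finset.range (min m k + 1), |α k i| ≤ M) →
      (∀ k, 1 ≤ k →
        ‖∑ i ∈ Finset.range (min m k + 1), α k i • (g (y (k - i)) - y (k - i))‖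
          ≤ ‖g (y k) - y k‖) →
      (∀ k, ‖y k - ystar‖ ≤ ((1 + ρ) / (1 - ρ)) * ρhat ^ k * ‖y 0 - ystar‖) ∧
      Filter.limsup
        (fun k : ℕ => (‖y k - ystar‖ / ‖y 0 - ystar‖) ^ ((1 : ℝ) / (k : ℝ)))
        Filter.atTop ≤ ρhat := by
  obtain ⟨hρlt, hhat1⟩ := hρhat
  have hρ0 : 0 ≤ ρ := hρ ▸ norm_nonneg G
  have h1ρ : (0:ℝ) < 1 - ρ := by linarith
  have hhat0 : 0 < ρhat := lt_of_le_of_lt hρ0 hρlt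
  have hGn : ∀ z : EuclideanSpace ℝ (Fin n), ‖G z‖ ≤ ρ * ‖z‖ := by
    intro z; have := G.le_opNorm z; rwa [hρ] at this
  set ρ' : ℝ := (ρ + ρhat) / 2 with hρ'def
  have hρ'pos : 0 < ρ' := by rw [hρ'def]; linarith
  have hρ'lt1 : ρ' < 1 := by rw [hρ'def]; linarith
  have hρltρ' : ρ < ρ' := by rw [hρ'def]; linarith
  have hρ'lthat : ρ' < ρhat := by rw [hρ'def]; linarith
  have hρ'm : (0:ℝ) < ρ' ^ m := pow_pos hρ'pos m
  have hρ'm1 : ρ' ^ m ≤ 1 := pow_le_one₀ hρ'pos.le hρ'lt1.le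
  set K : ℝ := 2 * M / ((1 - ρ) * ρ' ^ m) with hKdef
  have hKpos : 0 < K := by rw [hKdef]; positivity
  have hKge : 2 / (1 - ρ) ≤ K := by
    rw [hKdef, div_le_div_iff₀ h1ρ (by positivity)]
    nlinarith
  have hKge' : 2 ≤ K * (1 - ρ) := (div_le_iff₀ h1ρ).1 hKge
  set ε : ℝ := min (min ((1 - ρ) / 2) ((ρ' - ρ) / (3 * K))) ((1 - ρ) * (ρhat - ρ') / 3)
    with hεdef
  have hε0 : 0 < ε := by
    refine lt_min (lt_min (by linarith) (div_pos (by linarith) (by positivity))) ?_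
    have : 0 < ρhat - ρ' := by linarith
    positivity
  have hε1 : ε ≤ (1 - ρ) / 2 := le_trans (min_le_left _ _) (min_le_left _ _)
  have hε2 : 3 * ε * K ≤ ρ' - ρ := by
    have h : ε ≤ (ρ' - ρ) / (3 * K) := (min_le_left _ _).trans (min_le_right _ _)
    rw [le_div_iff₀ (by positivity)] at h
    linarith
  have hε3 : 3 * ε ≤ (1 - ρ) * (ρhat - ρ') := by
    have h := min_le_right (min ((1 - ρ) / 2) ((ρ' - ρ) / (3 * K)))
      ((1 - ρ) * (ρhat - ρ') / 3)
    rw [← hεdef] at h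
    linarith
  have hc2 : (1 - ρ) / 2 ≤ 1 - ρ - ε := by linarith
  have hc2pos : (0:ℝ) < 1 - ρ - ε := by linarith
  have hρε1 : ρ + ε ≤ 1 := by linarith
  have hc1le : 1 + ρ + ε ≤ 3 := by linarith
  -- little-o consequence
  have hlo := hderiv.isLittleO.def hε0
  rw [Metric.eventually_nhds_iff] at hlo
  obtain ⟨δ₀, hδ₀pos, hδ₀⟩ := hlo
  set δ : ℝ := δ₀ / 2 with hδdef
  have hδpos : 0 < δ := by rw [hδdef]; positivity
  have he0 : ∀ z, ‖z - ystar‖ ≤ δ → ‖g z - ystar - G (z - ystar)‖ ≤ ε * ‖z - ystar‖ := by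
    intro z hz
    have h := hδ₀ (show dist z ystar < δ₀ by
      rw [dist_eq_norm]; rw [hδdef] at hz; linarith)
    rwa [hfix] at h
  refine ⟨δ / (6 * K + 1), by positivity, fun y α h0 h1 hrec hsum habs hopt => ?_⟩
  set F : EuclideanSpace ℝ (Fin n) → EuclideanSpace ℝ (Fin n) := fun z => g z - z
    with hFdef
  set e : EuclideanSpace ℝ (Fin n) → EuclideanSpace ℝ (Fin n) :=
    fun z => g z - ystar - G (z - ystar) with hedef
  have he : ∀ z, ‖z - ystar‖ ≤ δ → ‖e z‖ ≤ ε * ‖z - ystar‖ := he0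
  have hgz : ∀ z, g z = ystar + G (z - ystar) + e z := by
    intro z
    show g z = ystar + G (z - ystar) + (g z - ystar - G (z - ystar))
    abel
  have hFz : ∀ z, F z = G (z - ystar) - (z - ystar) + e z := by
    intro z
    show g z - z = G (z - ystar) - (z - ystar) + (g z - ystar - G (z - ystar))
    abel
  have hub : ∀ z, ‖z - ystar‖ ≤ δ → ‖F z‖ ≤ (1 + ρ + ε) * ‖z - ystar‖ := by
    intro z hz
    rw [hFz z]
    have h1 := norm_add_le (G (z - ystar) - (z - ystar)) (e z)
    have h2 := norm_sub_le (G (z - ystar)) (z - ystar)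
    have h3 := hGn (z - ystar)
    have h4 := he z hz
    linarith
  have hlb : ∀ z, ‖z - ystar‖ ≤ δ → (1 - ρ - ε) * ‖z - ystar‖ ≤ ‖F z‖ := by
    intro z hz
    have hid : (z - ystar) = G (z - ystar) + e z - F z := by rw [hFz z]; abel
    have h1 : ‖z - ystar‖ ≤ ‖G (z - ystar)‖ + ‖e z‖ + ‖F z‖ := by
      conv_lhs => rw [hid]
      calc ‖G (z - ystar) + e z - F z‖ ≤ ‖G (z - ystar) + e z‖ + ‖F z‖ :=
            norm_sub_le _ _
        _ ≤ ‖G (z - ystar)‖ + ‖e z‖ + ‖F z‖ := by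
            have := norm_add_le (G (z - ystar)) (e z); linarith
    have h3 := hGn (z - ystar)
    have h4 := he z hz
    linarith
  have hrle : δ / (6 * K + 1) ≤ δ := by
    apply div_le_self hδpos.le; linarith
  have h0δ : ‖y 0 - ystar‖ ≤ δ := le_trans h0.le hrle
  have hF0 : ‖F (y 0)‖ ≤ (1 + ρ + ε) * ‖y 0 - ystar‖ := hub _ h0δ
  -- main induction
  have main : ∀ k, ‖y k - ystar‖ ≤ δ ∧ ‖F (y k)‖ ≤ ρ' ^ k * ‖F (y 0)‖ := by
    intro k
    induction k using Nat.strong_induction_on with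
    | _ k ih =>
      rcases k with _ | k
      · exact ⟨h0δ, by simp⟩
      rcases k with _ | j
      · -- k = 1
        have hy1 : y 1 - ystar = G (y 0 - ystar) + e (y 0) := by
          rw [h1, hgz (y 0)]; abel
        have he00 := he (y 0) h0δ
        have h1n : ‖y 1 - ystar‖ ≤ (ρ + ε) * ‖y 0 - ystar‖ := by
          rw [hy1]
          have t1 := norm_add_le (G (y 0 - ystar)) (e (y 0))
          have t2 := hGn (y 0 - ystar)
          linarith
        have h1le : ‖y 1 - ystar‖ ≤ ‖y 0 - ystar‖ := by
          linarith only [h1n,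
            mul_le_mul_of_nonneg_right hρε1 (norm_nonneg (y 0 - ystar))]
        have h1δ : ‖y 1 - ystar‖ ≤ δ := le_trans h1le h0δ
        refine ⟨h1δ, ?_⟩
        have hFid : F (y 1) = G (F (y 0)) - e (y 0) + e (y 1) := by
          rw [hFz (y 1), hFz (y 0), hy1]
          simp only [map_add, map_sub]
          abel
        have h1e := he (y 1) h1δ
        have hb : ‖F (y 1)‖ ≤ ρ * ‖F (y 0)‖ + ε * ‖y 0 - ystar‖ + ε * ‖y 1 - ystar‖ := by
          rw [hFid]
          have t1 := norm_add_le (G (F (y 0)) - e (y 0)) (e (y 1))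
          have t2 := norm_sub_le (G (F (y 0))) (e (y 0))
          have t3 := hGn (F (y 0))
          linarith
        have hq : (1 - ρ - ε) * ‖y 0 - ystar‖ ≤ ‖F (y 0)‖ := hlb _ h0δ
        have hq2 : (1 - ρ) / 2 * ‖y 0 - ystar‖ ≤ ‖F (y 0)‖ := by
          linarith only [hq,
            mul_le_mul_of_nonneg_right hc2 (norm_nonneg (y 0 - ystar))]
        have s1 : ‖y 0 - ystar‖ ≤ K * ‖F (y 0)‖ := by
          linarith only [mul_le_mul_of_nonneg_left hq2 hKpos.le,
            mul_le_mul_of_nonneg_right hKge' (norm_nonneg (y 0 - ystar))]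
        have h5 : ε * ‖y 0 - ystar‖ ≤ ε * (K * ‖F (y 0)‖) :=
          mul_le_mul_of_nonneg_left s1 hε0.le
        have h6 : ε * ‖y 1 - ystar‖ ≤ ε * (K * ‖F (y 0)‖) :=
          le_trans (mul_le_mul_of_nonneg_left h1le hε0.le) h5
        rw [pow_one]
        linarith only [hb, h5, h6,
          mul_le_mul_of_nonneg_right hε2 (norm_nonneg (F (y 0))),
          mul_nonneg (mul_nonneg hε0.le hKpos.le) (norm_nonneg (F (y 0)))]
      · -- k = j + 2
        have hk'1 : 1 ≤ j + 1 := Nat.le_add_left 1 j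
        have ihk := ih (j + 1) (by omega)
        have ihi : ∀ i ∈ Finset.range (min m (j + 1) + 1),
            ‖y (j + 1 - i) - ystar‖ ≤ δ ∧
              ‖F (y (j + 1 - i))‖ ≤ ρ' ^ (j + 1 - i) * ‖F (y 0)‖ := by
          intro i hi
          exact ih (j + 1 - i) (by omega)
        have expand : ∀ i ∈ Finset.range (min m (j + 1) + 1),
            α (j + 1) i • g (y (j + 1 - i))
              = α (j + 1) i • ystar + α (j + 1) i • G (y (j + 1 - i) - ystar)
                + α (j + 1) i • e (y (j + 1 - i)) := by
          intro i _
          rw [hgz (y (j + 1 - i)), smul_add, smul_add]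
        have hid1 : y (j + 1 + 1) - ystar = G (∑ i ∈ Finset.range (min m (j + 1) + 1), α (j + 1) i • (y (j + 1 - i) - ystar)) + (∑ i ∈ Finset.range (min m (j + 1) + 1), α (j + 1) i • e (y (j + 1 - i))) := by
          rw [hrec (j + 1) hk'1, map_sum]
          simp only [map_smul]
          rw [Finset.sum_congr rfl expand, Finset.sum_add_distrib,
            Finset.sum_add_distrib, ← Finset.sum_smul, hsum (j + 1) hk'1, one_smul]
          abel
        have hid2 : (∑ i ∈ Finset.range (min m (j + 1) + 1), α (j + 1) i • F (y (j + 1 - i))) = G (∑ i ∈ Finset.range (min m (j + 1) + 1), α (j + 1) i • (y (j + 1 - i) - ystar)) - (∑ i ∈ Finset.range (min m (j + 1) + 1), α (j + 1) i • (y (j + 1 - i) - ystar)) + (∑ i ∈ Finset.range (min m (j + 1) + 1), α (j + 1) i • e (y (j + 1 - i))) := by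
          rw [map_sum]
          simp only [map_smul]
          rw [← Finset.sum_sub_distrib, ← Finset.sum_add_distrib]
          refine Finset.sum_congr rfl fun i _ => ?_
          rw [hFz (y (j + 1 - i)), smul_add, smul_sub]
        have hid3 : F (y (j + 1 + 1)) = G (∑ i ∈ Finset.range (min m (j + 1) + 1), α (j + 1) i • F (y (j + 1 - i))) - (∑ i ∈ Finset.range (min m (j + 1) + 1), α (j + 1) i • e (y (j + 1 - i))) + e (y (j + 1 + 1)) := by
          rw [hFz (y (j + 1 + 1)), hid1, hid2]
          simp only [map_add, map_sub]
          abel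
        have hpow : ∀ i ∈ Finset.range (min m (j + 1) + 1),
            ρ' ^ (j + 1 - i) ≤ ρ' ^ (j + 1) / ρ' ^ m := by
          intro i hi
          rw [Finset.mem_range] at hi
          have hi_m : i ≤ m := by omega
          have hi_k : i ≤ j + 1 := by omega
          have hh : ρ' ^ (j + 1 - i) = ρ' ^ (j + 1) / ρ' ^ i := by
            rw [eq_div_iff (by positivity), ← pow_add]
            congr 1
            omega
          rw [hh]
          exact div_le_div_of_nonneg_left (by positivity) hρ'm
            (pow_le_pow_of_le_one hρ'pos.le hρ'lt1.le hi_m)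
        set Q : ℝ := ρ' ^ (j + 1) / ρ' ^ m * ‖F (y 0)‖ with hQdef
        have hQ0 : 0 ≤ Q := by rw [hQdef]; positivity
        set D : ℝ := 2 * Q / (1 - ρ) with hDdef
        have hD0 : 0 ≤ D := by rw [hDdef]; positivity
        have hvD : ∀ i ∈ Finset.range (min m (j + 1) + 1),
            ‖y (j + 1 - i) - ystar‖ ≤ D := by
          intro i hi
          obtain ⟨hδi, hFi⟩ := ihi i hi
          have hlbi := hlb _ hδi
          have hQi : ‖F (y (j + 1 - i))‖ ≤ Q := by
            rw [hQdef]
            exact le_trans hFi (mul_le_mul_of_nonneg_right (hpow i hi) (norm_nonneg _))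
          rw [hDdef, le_div_iff₀ h1ρ]
          linarith only [hlbi, hQi,
            mul_le_mul_of_nonneg_right hc2 (norm_nonneg (y (j + 1 - i) - ystar))]
        have heD : ∀ i ∈ Finset.range (min m (j + 1) + 1),
            ‖e (y (j + 1 - i))‖ ≤ ε * D := fun i hi =>
          le_trans (he _ (ihi i hi).1) (mul_le_mul_of_nonneg_left (hvD i hi) hε0.le)
        have hwn : ‖(∑ i ∈ Finset.range (min m (j + 1) + 1), α (j + 1) i • (y (j + 1 - i) - ystar))‖ ≤ M * D := by
          calc ‖(∑ i ∈ Finset.range (min m (j + 1) + 1), α (j + 1) i • (y (j + 1 - i) - ystar))‖ ≤ ∑ i ∈ Finset.range (min m (j + 1) + 1),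
                ‖α (j + 1) i • (y (j + 1 - i) - ystar)‖ := norm_sum_le _ _
            _ = ∑ i ∈ Finset.range (min m (j + 1) + 1),
                |α (j + 1) i| * ‖y (j + 1 - i) - ystar‖ := by
                simp only [norm_smul, Real.norm_eq_abs]
            _ ≤ ∑ i ∈ Finset.range (min m (j + 1) + 1), |α (j + 1) i| * D :=
                Finset.sum_le_sum fun i hi =>
                  mul_le_mul_of_nonneg_left (hvD i hi) (abs_nonneg _)
            _ = (∑ i ∈ Finset.range (min m (j + 1) + 1), |α (j + 1) i|) * D :=
                (Finset.sum_mul _ _ _).symm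
            _ ≤ M * D := mul_le_mul_of_nonneg_right (habs (j + 1) hk'1) hD0
        have hEn : ‖(∑ i ∈ Finset.range (min m (j + 1) + 1), α (j + 1) i • e (y (j + 1 - i)))‖ ≤ M * (ε * D) := by
          calc ‖(∑ i ∈ Finset.range (min m (j + 1) + 1), α (j + 1) i • e (y (j + 1 - i)))‖ ≤ ∑ i ∈ Finset.range (min m (j + 1) + 1),
                ‖α (j + 1) i • e (y (j + 1 - i))‖ := norm_sum_le _ _
            _ = ∑ i ∈ Finset.range (min m (j + 1) + 1),
                |α (j + 1) i| * ‖e (y (j + 1 - i))‖ := by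
                simp only [norm_smul, Real.norm_eq_abs]
            _ ≤ ∑ i ∈ Finset.range (min m (j + 1) + 1), |α (j + 1) i| * (ε * D) :=
                Finset.sum_le_sum fun i hi =>
                  mul_le_mul_of_nonneg_left (heD i hi) (abs_nonneg _)
            _ = (∑ i ∈ Finset.range (min m (j + 1) + 1), |α (j + 1) i|) * (ε * D) :=
                (Finset.sum_mul _ _ _).symm
            _ ≤ M * (ε * D) := mul_le_mul_of_nonneg_right (habs (j + 1) hk'1)
                (mul_nonneg hε0.le hD0)
        have hSopt : ‖(∑ i ∈ Finset.range (min m (j + 1) + 1), α (j + 1) i • F (y (j + 1 - i)))‖ ≤ ‖F (y (j + 1))‖ := by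
          simpa only [hFdef] using hopt (j + 1) hk'1
        have hSn : ‖(∑ i ∈ Finset.range (min m (j + 1) + 1), α (j + 1) i • F (y (j + 1 - i)))‖ ≤ ρ' ^ (j + 1) * ‖F (y 0)‖ := le_trans hSopt ihk.2
        have hMD0 : (0:ℝ) ≤ M * D := mul_nonneg (by linarith) hD0
        have hy1n : ‖y (j + 1 + 1) - ystar‖ ≤ M * D := by
          rw [hid1]
          have t1 := norm_add_le (G (∑ i ∈ Finset.range (min m (j + 1) + 1), α (j + 1) i • (y (j + 1 - i) - ystar))) (∑ i ∈ Finset.range (min m (j + 1) + 1), α (j + 1) i • e (y (j + 1 - i)))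
          have t2 := hGn (∑ i ∈ Finset.range (min m (j + 1) + 1), α (j + 1) i • (y (j + 1 - i) - ystar))
          linarith only [t1, t2, hEn,
            mul_le_mul_of_nonneg_left hwn hρ0,
            mul_nonneg (show (0:ℝ) ≤ 1 - ρ - ε by linarith) hMD0]
        have hMD : M * D = K * (ρ' ^ (j + 1) * ‖F (y 0)‖) := by
          rw [hDdef, hQdef, hKdef]
          field_simp
        have hδnew : ‖y (j + 1 + 1) - ystar‖ ≤ δ := by
          have hpk1 : ρ' ^ (j + 1) ≤ 1 := pow_le_one₀ hρ'pos.le hρ'lt1.le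
          have hKF : M * D ≤ K * ‖F (y 0)‖ := by
            rw [hMD]
            exact mul_le_mul_of_nonneg_left
              (mul_le_of_le_one_left (norm_nonneg _) hpk1) hKpos.le
          have hF0' : ‖F (y 0)‖ ≤ 3 * ‖y 0 - ystar‖ :=
            le_trans hF0 (mul_le_mul_of_nonneg_right hc1le (norm_nonneg _))
          have hr3 : 3 * K * (δ / (6 * K + 1)) ≤ δ / 2 := by
            rw [show 3 * K * (δ / (6 * K + 1)) = 3 * K * δ / (6 * K + 1) by ring,
              div_le_div_iff₀ (by positivity) (by norm_num)]
            linarith only [mul_nonneg hKpos.le hδpos.le, hδpos]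
          calc ‖y (j + 1 + 1) - ystar‖ ≤ M * D := hy1n
            _ ≤ K * ‖F (y 0)‖ := hKF
            _ ≤ K * (3 * ‖y 0 - ystar‖) := mul_le_mul_of_nonneg_left hF0' hKpos.le
            _ ≤ K * (3 * (δ / (6 * K + 1))) := by
                refine mul_le_mul_of_nonneg_left ?_ hKpos.le
                exact mul_le_mul_of_nonneg_left h0.le (by norm_num)
            _ = 3 * K * (δ / (6 * K + 1)) := by ring
            _ ≤ δ / 2 := hr3
            _ ≤ δ := by linarith only [hδpos]
        refine ⟨hδnew, ?_⟩
        have he' : ‖e (y (j + 1 + 1))‖ ≤ ε * (M * D) :=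
          le_trans (he _ hδnew) (mul_le_mul_of_nonneg_left hy1n hε0.le)
        have hbF : ‖F (y (j + 1 + 1))‖
            ≤ ρ * (ρ' ^ (j + 1) * ‖F (y 0)‖) + M * (ε * D) + ε * (M * D) := by
          rw [hid3]
          have t1 := norm_add_le (G (∑ i ∈ Finset.range (min m (j + 1) + 1), α (j + 1) i • F (y (j + 1 - i))) - (∑ i ∈ Finset.range (min m (j + 1) + 1), α (j + 1) i • e (y (j + 1 - i)))) (e (y (j + 1 + 1)))
          have t2 := norm_sub_le (G (∑ i ∈ Finset.range (min m (j + 1) + 1), α (j + 1) i • F (y (j + 1 - i)))) (∑ i ∈ Finset.range (min m (j + 1) + 1), α (j + 1) i • e (y (j + 1 - i)))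
          have t3 := hGn (∑ i ∈ Finset.range (min m (j + 1) + 1), α (j + 1) i • F (y (j + 1 - i)))
          have t4 := mul_le_mul_of_nonneg_left hSn hρ0
          linarith [hEn, he']
        have hT0 : (0:ℝ) ≤ ρ' ^ (j + 1) * ‖F (y 0)‖ := by positivity
        have h2eK := mul_le_mul_of_nonneg_right hε2 hT0
        have hεMD : ε * (M * D) = ε * K * (ρ' ^ (j + 1) * ‖F (y 0)‖) := by
          rw [hMD]; ring
        rw [pow_succ]
        linarith only [hbF, hεMD, h2eK,
          mul_nonneg (mul_nonneg hε0.le hKpos.le) hT0]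
  -- part 1
  have hbound : ∀ k, ‖y k - ystar‖ ≤ ((1 + ρ) / (1 - ρ)) * ρhat ^ k * ‖y 0 - ystar‖ := by
    have hC1 : (1:ℝ) ≤ (1 + ρ) / (1 - ρ) := by
      rw [le_div_iff₀ h1ρ]; linarith
    intro k
    rcases k with _ | j
    · simp only [pow_zero, mul_one]
      calc ‖y 0 - ystar‖ = 1 * ‖y 0 - ystar‖ := (one_mul _).symm
        _ ≤ (1 + ρ) / (1 - ρ) * ‖y 0 - ystar‖ :=
            mul_le_mul_of_nonneg_right hC1 (norm_nonneg _)
    · obtain ⟨hδk, hFk⟩ := main (j + 1)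
      have hlbk := hlb _ hδk
      have hpj : ρ' ^ (j + 1) ≤ ρ' * ρhat ^ j := by
        rw [pow_succ']
        exact mul_le_mul_of_nonneg_left (pow_le_pow_left₀ hρ'pos.le hρ'lthat.le j)
          hρ'pos.le
      have h8 : (1 - ρ - ε) * ‖y (j + 1) - ystar‖
          ≤ ρ' * ρhat ^ j * ((1 + ρ + ε) * ‖y 0 - ystar‖) := by
        calc (1 - ρ - ε) * ‖y (j + 1) - ystar‖ ≤ ‖F (y (j + 1))‖ := hlbk
          _ ≤ ρ' ^ (j + 1) * ‖F (y 0)‖ := hFk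
          _ ≤ ρ' * ρhat ^ j * ((1 + ρ + ε) * ‖y 0 - ystar‖) :=
              mul_le_mul hpj hF0 (norm_nonneg _) (by positivity)
      have key' : (1 + ρ + ε) * (1 - ρ) * ρ' ≤ (1 + ρ) * (1 - ρ - ε) * ρhat := by
        have ha : (1 + ρ) * ρhat ≤ 2 := by nlinarith
        have hbb : (1 - ρ) * ρ' ≤ 1 := by nlinarith
        have hcc : (1 - ρ) * (ρhat - ρ') ≤ (1 + ρ) * ((1 - ρ) * (ρhat - ρ')) := by
          nlinarith [mul_nonneg h1ρ.le (show (0:ℝ) ≤ ρhat - ρ' by linarith)]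
        nlinarith [mul_le_mul_of_nonneg_left ha hε0.le,
          mul_le_mul_of_nonneg_left hbb hε0.le, hε3, hcc]
      have key'' : (1 + ρ + ε) * ρ' ≤ (1 - ρ - ε) * ((1 + ρ) / (1 - ρ)) * ρhat := by
        rw [show (1 - ρ - ε) * ((1 + ρ) / (1 - ρ)) * ρhat
            = (1 - ρ - ε) * (1 + ρ) * ρhat / (1 - ρ) by ring, le_div_iff₀ h1ρ]
        nlinarith [key']
      rw [← mul_le_mul_iff_right₀ hc2pos]
      calc (1 - ρ - ε) * ‖y (j + 1) - ystar‖
          ≤ ρ' * ρhat ^ j * ((1 + ρ + ε) * ‖y 0 - ystar‖) := h8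
        _ = (1 + ρ + ε) * ρ' * (ρhat ^ j * ‖y 0 - ystar‖) := by ring
        _ ≤ (1 - ρ - ε) * ((1 + ρ) / (1 - ρ)) * ρhat * (ρhat ^ j * ‖y 0 - ystar‖) :=
            mul_le_mul_of_nonneg_right key'' (by positivity)
        _ = (1 - ρ - ε) * ((1 + ρ) / (1 - ρ) * ρhat ^ (j + 1) * ‖y 0 - ystar‖) := by
            ring
  refine ⟨hbound, ?_⟩
  have hCpos : (0:ℝ) < (1 + ρ) / (1 - ρ) := by positivity
  have hratio : ∀ k : ℕ, 1 ≤ k →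
      (‖y k - ystar‖ / ‖y 0 - ystar‖) ^ ((1:ℝ) / (k:ℝ))
        ≤ ((1 + ρ) / (1 - ρ)) ^ ((1:ℝ) / (k:ℝ)) * ρhat := by
    intro k hk
    have hk0 : (k:ℝ) ≠ 0 := Nat.cast_ne_zero.2 (by omega)
    have hdiv : ‖y k - ystar‖ / ‖y 0 - ystar‖ ≤ (1 + ρ) / (1 - ρ) * ρhat ^ k := by
      rcases eq_or_lt_of_le (norm_nonneg (y 0 - ystar)) with hz | hz
      · have h9 := hbound k
        rw [← hz, mul_zero] at h9
        have h10 : ‖y k - ystar‖ = 0 := le_antisymm h9 (norm_nonneg _)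
        rw [h10, zero_div]
        positivity
      · rw [div_le_iff₀ hz]
        exact hbound k
    calc (‖y k - ystar‖ / ‖y 0 - ystar‖) ^ ((1:ℝ) / (k:ℝ))
        ≤ ((1 + ρ) / (1 - ρ) * ρhat ^ k) ^ ((1:ℝ) / (k:ℝ)) :=
          Real.rpow_le_rpow (by positivity) hdiv (by positivity)
      _ = ((1 + ρ) / (1 - ρ)) ^ ((1:ℝ) / (k:ℝ)) * (ρhat ^ k) ^ ((1:ℝ) / (k:ℝ)) :=
          Real.mul_rpow hCpos.le (by positivity)
      _ = ((1 + ρ) / (1 - ρ)) ^ ((1:ℝ) / (k:ℝ)) * ρhat := by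
          rw [← Real.rpow_natCast ρhat k, ← Real.rpow_mul hhat0.le, mul_one_div,
            div_self hk0, Real.rpow_one]
  have hto : Tendsto (fun k : ℕ => ((1 + ρ) / (1 - ρ)) ^ ((1:ℝ) / (k:ℝ)) * ρhat)
      atTop (nhds ρhat) := by
    have h1d : Tendsto (fun k : ℕ => (1:ℝ) / (k:ℝ)) atTop (nhds 0) :=
      tendsto_one_div_atTop_nhds_zero_nat
    have hcont : ContinuousAt (fun x : ℝ => ((1 + ρ) / (1 - ρ)) ^ x) 0 :=
      Real.continuousAt_const_rpow hCpos.ne'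
    have h2 := hcont.tendsto.comp h1d
    rw [Real.rpow_zero] at h2
    have h3 := h2.mul_const ρhat
    rwa [one_mul] at h3
  have hle : (fun k : ℕ => (‖y k - ystar‖ / ‖y 0 - ystar‖) ^ ((1:ℝ) / (k:ℝ)))
      ≤ᶠ[atTop] fun k : ℕ => ((1 + ρ) / (1 - ρ)) ^ ((1:ℝ) / (k:ℝ)) * ρhat :=
    eventually_atTop.2 ⟨1, hratio⟩
  have hcob : IsCoboundedUnder (· ≤ ·) atTop
      (fun k : ℕ => (‖y k - ystar‖ / ‖y 0 - ystar‖) ^ ((1:ℝ) / (k:ℝ))) := by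
    refine IsBoundedUnder.isCoboundedUnder_le ?_
    exact isBoundedUnder_of ⟨0, fun k => Real.rpow_nonneg (by positivity) _⟩
  calc limsup (fun k : ℕ => (‖y k - ystar‖ / ‖y 0 - ystar‖) ^ ((1:ℝ) / (k:ℝ))) atTop
      ≤ limsup (fun k : ℕ => ((1 + ρ) / (1 - ρ)) ^ ((1:ℝ) / (k:ℝ)) * ρhat) atTop :=
        limsup_le_limsup hle hcob hto.isBoundedUnder_le
    _ = ρhat := hto.limsup_eq
end

section
/- Let f : ℝⁿ → ℝ be differentiable, μ-strongly convex and L-smooth, with minimizer x⋆, and let γ ∈ (0, 2/(μ+L)]. Suppose a sequence (x_k) satisfies f(x_{k+1}) ≤ f(x_k) − (γ/2)‖∇f(x_k)‖² for all k. Then ‖x_k − x⋆‖² ≤ (2/μ)·(f(x₀) − f(x⋆))·(1 − γμ)^k for all k; in particular x_k → x⋆ at a linear rate. -/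
theorem stmt_14 (n : ℕ) (f : EuclideanSpace ℝ (Fin n) → ℝ)
    (gradf : EuclideanSpace ℝ (Fin n) → EuclideanSpace ℝ (Fin n))
    (hdiff : ∀ x, HasGradientAt f (gradf x) x)
    (μ L : ℝ) (hμ : 0 < μ) (hμL : μ ≤ L)
    (hstrong : ∀ x y, f y ≥ f x + inner (𝕜 := ℝ) (gradf x) (y - x)
      + (μ / 2) * ‖y - x‖ ^ 2)
    (hsmooth : ∀ x y, ‖gradf x - gradf y‖ ≤ L * ‖x - y‖)
    (xstar : EuclideanSpace ℝ (Fin n)) (hmin : ∀ x, f xstar ≤ f x)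
    (γ : ℝ) (hγ : γ ∈ Set.Ioc 0 (2 / (μ + L)))
    (x : ℕ → EuclideanSpace ℝ (Fin n))
    (hdesc : ∀ k, f (x (k + 1)) ≤ f (x k) - (γ / 2) * ‖gradf (x k)‖ ^ 2) :
    ∀ k, ‖x k - xstar‖ ^ 2 ≤ (2 / μ) * (f (x 0) - f xstar) * (1 - γ * μ) ^ k := by
  obtain ⟨hγ0, hγ2⟩ := hγ
  -- PL inequality
  have hPL : ∀ z, 2 * μ * (f z - f xstar) ≤ ‖gradf z‖ ^ 2 := by
    intro z
    have h1 := hstrong z xstar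
    have hcs : -(‖gradf z‖ * ‖xstar - z‖) ≤ inner (𝕜 := ℝ) (gradf z) (xstar - z) :=
      neg_le_of_abs_le (abs_real_inner_le_norm (gradf z) (xstar - z))
    nlinarith [sq_nonneg (μ * ‖xstar - z‖ - ‖gradf z‖), hcs, hμ]
  have h1γμ : 0 ≤ 1 - γ * μ := by
    have : γ ≤ 1 / μ := by
      have h2μ : 2 / (μ + L) ≤ 1 / μ := by
        rw [div_le_div_iff₀ (by linarith) hμ]
        linarith
      linarith
    have h1μ : γ * μ ≤ 1 := by
      have := (le_div_iff₀ hμ).mp this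
      linarith
    linarith
  -- function value contraction
  have hfk : ∀ k, f (x k) - f xstar ≤ (f (x 0) - f xstar) * (1 - γ * μ) ^ k := by
    intro k
    induction k with
    | zero => simp
    | succ k ih =>
      have hd := hdesc k
      have hpl := hPL (x k)
      have step : f (x (k + 1)) - f xstar ≤ (1 - γ * μ) * (f (x k) - f xstar) := by
        nlinarith [hγ0]
      calc f (x (k + 1)) - f xstar ≤ (1 - γ * μ) * (f (x k) - f xstar) := step
        _ ≤ (1 - γ * μ) * ((f (x 0) - f xstar) * (1 - γ * μ) ^ k) :=
            mul_le_mul_of_nonneg_left ih h1γμ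
        _ = (f (x 0) - f xstar) * (1 - γ * μ) ^ (k + 1) := by ring
  -- gradient at minimizer is zero
  have hgrad0 : gradf xstar = 0 := by
    have hloc : IsLocalMin f xstar := (isMinOn_univ_iff.mpr hmin).isLocalMin
      (Filter.univ_mem)
    have hfd := (hdiff xstar).hasFDerivAt
    have := hloc.hasFDerivAt_eq_zero hfd
    have h2 : ∀ v, inner (𝕜 := ℝ) (gradf xstar) v = (0 : ℝ) := by
      intro v
      have := congrFun (congrArg DFunLike.coe this) v
      simpa using this
    have := h2 (gradf xstar)
    rwa [real_inner_self_eq_norm_sq, pow_eq_zero_iff (by norm_num), norm_eq_zero] at this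
  -- strong convexity at xstar
  intro k
  have hs := hstrong xstar (x k)
  rw [hgrad0] at hs
  simp only [inner_zero_left] at hs
  have hdist : μ / 2 * ‖x k - xstar‖ ^ 2 ≤ f (x k) - f xstar := by linarith
  have hmu2 : (0:ℝ) < 2 / μ := by positivity
  have := hfk k
  calc ‖x k - xstar‖ ^ 2 ≤ (2 / μ) * (f (x k) - f xstar) := by
        rw [div_mul_eq_mul_div, le_div_iff₀ hμ]; linarith
    _ ≤ (2 / μ) * ((f (x 0) - f xstar) * (1 - γ * μ) ^ k) :=
        mul_le_mul_of_nonneg_left this (le_of_lt hmu2)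
    _ = (2 / μ) * (f (x 0) - f xstar) * (1 - γ * μ) ^ k := by ring
end
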